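/- Let d ≥ 1. The function f_D(X) = (1/2)(‖X‖² + ‖X⁻¹‖²) is convex on the convex set of symmetric positive definite d×d real matrices. -/

import Mathlib

open Matrix

section Aux

variable {n : Type*} [Fintype n] [DecidableEq n]

omit [DecidableEq n] in
theorem Matrix.PosDef.transpose_eq' {Z : Matrix n n ℝ} (hZ : Z.PosDef) : Zᵀ = Z := by
  have := hZ.isHermitian
  rwa [Matrix.IsHermitian, conjTranspose_eq_transpose_of_trivial] at this

theorem one_le_diag_mul_inv_diag {Z : Matrix n n ℝ} (hZ : Z.PosDef) (i : n) :
    1 ≤ Z i i * Z⁻¹ i i := by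
  have hβ : 0 < Z⁻¹ i i := hZ.inv.diag_pos (i := i)
  have hα : 0 < Z i i := hZ.diag_pos (i := i)
  set β := Z⁻¹ i i with hβdef
  set e : n → ℝ := Pi.single i 1 with he
  set u : n → ℝ := Z⁻¹ *ᵥ e with hu
  set c : ℝ := 1/β with hc
  have hZZ : Z * Z⁻¹ = 1 := mul_nonsing_inv Z (isUnit_iff_ne_zero.mpr hZ.det_pos.ne')
  have e1 : Z *ᵥ u = e := by rw [hu, mulVec_mulVec, hZZ, one_mulVec]
  have eZe : e ⬝ᵥ (Z *ᵥ e) = Z i i := by simp [he, single_dotProduct, mulVec_single]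
  have eu : u ⬝ᵥ e = β := by simp [hu, he, dotProduct_single, mulVec_single, hβdef]
  have ee : e ⬝ᵥ e = 1 := by simp [he, single_dotProduct, Pi.single_eq_same]
  have h4 : u ᵥ* Z = Z *ᵥ u := by conv_lhs => rw [← hZ.transpose_eq', vecMul_transpose]
  have uZe : u ⬝ᵥ (Z *ᵥ e) = 1 := by rw [dotProduct_mulVec, h4, e1, ee]
  set v : n → ℝ := e - c • u with hv
  have hq := hZ.posSemidef.dotProduct_mulVec_nonneg v
  rw [star_trivial] at hq
  have key : v ⬝ᵥ (Z *ᵥ v) = Z i i - 2*c + c^2*β := by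
    simp only [hv, sub_dotProduct, dotProduct_sub, smul_dotProduct, dotProduct_smul,
      mulVec_sub, mulVec_smul, e1, eZe, ee, uZe, eu, smul_eq_mul]
    ring
  rw [key] at hq
  have : c * β = 1 := by rw [hc]; field_simp
  nlinarith [hq, hβ, hα, this]

theorem scalar_klein (z w e : ℝ) (hz : 0 < z) (he : 0 < e) (h1 : 1 ≤ z * w) :
    3 * e^2 ≤ w^2 + 2 * (e^3 * z) := by
  have hz2 : (1:ℝ)/z ≤ w := by rw [div_le_iff₀ hz]; linarith [h1, mul_comm z w]
  have h3 : 1/z^2 ≤ w^2 := by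
    have : (1/z)^2 ≤ w^2 := pow_le_pow_left₀ (by positivity) hz2 2
    simpa [div_pow] using this
  have key : 3 * e^2 ≤ 1/z^2 + 2 * (e^3 * z) := by
    rw [div_add' _ _ _ (by positivity), le_div_iff₀ (by positivity)]
    nlinarith [sq_nonneg (e*z - 1), mul_pos he hz]
  linarith

theorem trace_diagonal_mul' (g : n → ℝ) (Z : Matrix n n ℝ) :
    trace (diagonal g * Z) = ∑ i, g i * Z i i := by
  simp [trace, diag, diagonal_mul]

omit [DecidableEq n] in
theorem trace_sq_symm {Z : Matrix n n ℝ} (hsym : Zᵀ = Z) :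
    trace (Z * Z) = ∑ i, ∑ j, (Z i j)^2 := by
  have h : ∀ i j, Z j i = Z i j := fun i j => by
    conv_lhs => rw [← hsym]
    exact transpose_apply Z j i
  simp only [trace, diag, mul_apply, sq]
  exact Finset.sum_congr rfl fun i _ => Finset.sum_congr rfl fun j _ => by rw [h i j]

omit [DecidableEq n] in
theorem sum_diag_sq_le_trace_sq {Z : Matrix n n ℝ} (hsym : Zᵀ = Z) :
    ∑ i, (Z i i)^2 ≤ trace (Z * Z) := by
  rw [trace_sq_symm hsym]
  exact Finset.sum_le_sum fun i _ =>
    Finset.single_le_sum (f := fun j => (Z i j)^2) (fun j _ => sq_nonneg _) (Finset.mem_univ i)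

theorem conj_mul_conj (U X W : Matrix n n ℝ) (h : star U * U = 1) :
    (U * X * star U) * (U * W * star U) = U * (X * W) * star U := by
  rw [show (U * X * star U) * (U * W * star U) = U * X * ((star U * U) * (W * star U)) by
    simp only [mul_assoc], h, one_mul, ← mul_assoc, ← mul_assoc, mul_assoc U X W]

theorem trace_conj (U X : Matrix n n ℝ) (h : star U * U = 1) :
    trace (U * X * star U) = trace X := by
  rw [trace_mul_comm, ← mul_assoc, h, one_mul]

theorem trace_conj_mul (U X Y : Matrix n n ℝ) :
    trace (U * X * star U * Y) = trace (X * (star U * Y * U)) := by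
  simp only [mul_assoc]
  rw [trace_mul_comm]
  simp only [mul_assoc]

theorem posDef_conj {Y U : Matrix n n ℝ} (hY : Y.PosDef) (hU1 : star U * U = 1) :
    (star U * Y * U).PosDef := by
  refine PosDef.of_dotProduct_mulVec_pos ?_ ?_
  · show (star U * Y * U)ᴴ = _
    rw [conjTranspose_mul, conjTranspose_mul, hY.isHermitian.eq]
    simp [Matrix.star_eq_conjTranspose, mul_assoc]
  · intro x hx
    have hUx : U *ᵥ x ≠ 0 := by
      intro h
      apply hx
      have : (star U * U) *ᵥ x = 0 := by
        rw [← mulVec_mulVec, h, mulVec_zero]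
      rwa [hU1, one_mulVec] at this
    have hpos := hY.dotProduct_mulVec_pos hUx
    have hrw : star x ⬝ᵥ (star U * Y * U) *ᵥ x = star (U *ᵥ x) ⬝ᵥ Y *ᵥ (U *ᵥ x) := by
      rw [star_mulVec, ← mulVec_mulVec, ← mulVec_mulVec, dotProduct_mulVec (star x)]
      congr 1
    rw [hrw]
    exact hpos

/-- Klein-type tangent inequality: for SPD `P, Y`, `3 tr(P²) ≤ tr(Y⁻²) + 2 tr(P³ Y)`. -/
theorem klein {P Y : Matrix n n ℝ} (hP : P.PosDef) (hY : Y.PosDef) :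
    3 * trace (P * P) ≤ trace (Y⁻¹ * Y⁻¹) + 2 * trace (P * P * P * Y) := by
  have hH := hP.isHermitian
  set ev := hH.eigenvalues with hev
  set U : Matrix n n ℝ := (hH.eigenvectorUnitary : Matrix n n ℝ) with hUdef
  have hU1 : star U * U = 1 := Unitary.coe_star_mul_self _
  have hU2 : U * star U = 1 := Unitary.coe_mul_star_self _
  set D : Matrix n n ℝ := diagonal ev with hD
  have hspec : P = U * D * star U := by
    have := hH.spectral_theorem
    simpa [hD, hev, hUdef, Function.comp] using this
  set Z : Matrix n n ℝ := star U * Y * U with hZdef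
  have hZ : Z.PosDef := posDef_conj hY hU1
  have hYdet : IsUnit Y.det := isUnit_iff_ne_zero.mpr hY.det_pos.ne'
  -- trace (P * P) = ∑ ev i ^ 2
  have t1 : trace (P * P) = ∑ i, (ev i)^2 := by
    rw [hspec, conj_mul_conj U D D hU1, trace_conj _ _ hU1, hD, diagonal_mul_diagonal,
      trace_diagonal]
    exact Finset.sum_congr rfl fun i _ => (sq (ev i)).symm
  -- trace (P*P*P*Y) = ∑ ev i ^3 * Z i i
  have t2 : trace (P * P * P * Y) = ∑ i, (ev i)^3 * Z i i := by
    rw [hspec, conj_mul_conj U D D hU1, conj_mul_conj U (D*D) D hU1, trace_conj_mul, ← hZdef,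
      hD, diagonal_mul_diagonal, diagonal_mul_diagonal, trace_diagonal_mul']
    exact Finset.sum_congr rfl fun i _ => by rw [pow_succ, sq]
  -- trace (Y⁻¹ * Y⁻¹) = trace (Z⁻¹ * Z⁻¹)
  have hZinv : Z⁻¹ = star U * Y⁻¹ * U := by
    apply inv_eq_right_inv
    rw [hZdef]
    rw [show star U * Y * U * (star U * Y⁻¹ * U) = star U * Y * ((U * star U) * (Y⁻¹ * U)) by
      simp only [mul_assoc], hU2, one_mul,
      show star U * Y * (Y⁻¹ * U) = star U * (Y * Y⁻¹) * U by simp only [mul_assoc],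
      mul_nonsing_inv _ hYdet, mul_one, hU1]
  have t3 : trace (Z⁻¹ * Z⁻¹) = trace (Y⁻¹ * Y⁻¹) := by
    rw [hZinv]
    have h1 : star U * Y⁻¹ * U = star U * Y⁻¹ * star (star U) := by rw [star_star]
    rw [h1, conj_mul_conj (star U) Y⁻¹ Y⁻¹ (by rwa [star_star]), trace_conj _ _ (by rwa [star_star])]
  -- pointwise estimate
  have hsum : 3 * ∑ i, (ev i)^2 ≤ (∑ i, (Z⁻¹ i i)^2) + 2 * ∑ i, (ev i)^3 * Z i i := by
    rw [Finset.mul_sum, Finset.mul_sum, ← Finset.sum_add_distrib]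
    apply Finset.sum_le_sum
    intro i _
    exact scalar_klein (Z i i) (Z⁻¹ i i) (ev i) (hZ.diag_pos (i := i)) (hP.eigenvalues_pos i)
      (one_le_diag_mul_inv_diag hZ i)
  have hdiag : (∑ i, (Z⁻¹ i i)^2) ≤ trace (Z⁻¹ * Z⁻¹) :=
    sum_diag_sq_le_trace_sq hZ.inv.transpose_eq'
  rw [t1, t2, ← t3]
  linarith


omit [DecidableEq n] in
theorem trace_transpose_mul_self_nonneg' (X : Matrix n n ℝ) : 0 ≤ trace (Xᵀ * X) := by
  simp only [trace, diag, mul_apply, transpose_apply]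
  exact Finset.sum_nonneg fun i _ => Finset.sum_nonneg fun j _ => mul_self_nonneg _

omit [DecidableEq n] in
theorem trace_transpose_mul_comm' (A B : Matrix n n ℝ) : trace (Bᵀ * A) = trace (Aᵀ * B) := by
  rw [show Aᵀ * B = (Bᵀ * A)ᵀ by rw [transpose_mul, transpose_transpose], trace_transpose]

omit [DecidableEq n] in
theorem frob_part {A B : Matrix n n ℝ} {a b : ℝ} (ha : 0 ≤ a) (hb : 0 ≤ b) (hab : a + b = 1) :
    trace ((a • A + b • B)ᵀ * (a • A + b • B)) ≤ a * trace (Aᵀ * A) + b * trace (Bᵀ * B) := by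
  have e1 : trace ((a • A + b • B)ᵀ * (a • A + b • B)) =
      a^2 * trace (Aᵀ*A) + 2*a*b*trace (Aᵀ*B) + b^2*trace (Bᵀ*B) := by
    simp only [transpose_add, transpose_smul, add_mul, mul_add, smul_mul_assoc,
      mul_smul_comm, trace_add, trace_smul, smul_eq_mul, smul_smul]
    rw [trace_transpose_mul_comm' A B]
    ring
  have h0 := trace_transpose_mul_self_nonneg' (A - B)
  have e0 : trace ((A - B)ᵀ * (A - B)) =
      trace (Aᵀ*A) - 2*trace (Aᵀ*B) + trace (Bᵀ*B) := by
    simp only [transpose_sub, sub_mul, mul_sub, trace_sub]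
    rw [trace_transpose_mul_comm' A B]
    ring
  rw [e0] at h0
  rw [e1]
  have hb' : b = 1 - a := by linarith
  subst hb'
  nlinarith [h0, ha, mul_nonneg (mul_nonneg ha (by linarith : (0:ℝ) ≤ 1 - a)) h0]

theorem posDef_smul' {A : Matrix n n ℝ} (hA : A.PosDef) {a : ℝ} (ha : 0 < a) :
    (a • A).PosDef := by
  refine PosDef.of_dotProduct_mulVec_pos ?_ ?_
  · show (a • A)ᴴ = _
    rw [conjTranspose_smul, hA.isHermitian.eq, star_trivial]
  · intro x hx
    rw [smul_mulVec, dotProduct_smul, smul_eq_mul]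
    exact mul_pos ha (hA.dotProduct_mulVec_pos hx)

theorem convex_posDef : Convex ℝ {X : Matrix n n ℝ | X.PosDef} := by
  intro A hA B hB a b ha hb hab
  simp only [Set.mem_setOf_eq] at *
  rcases eq_or_lt_of_le ha with h|h
  · have hb1 : b = 1 := by linarith
    simp [← h, hb1, zero_smul, one_smul, zero_add]
    exact hB
  · rcases eq_or_lt_of_le hb with h'|h'
    · have ha1 : a = 1 := by linarith
      simp [← h', ha1, zero_smul, one_smul, add_zero]
      exact hA
    · exact (posDef_smul' hA h).add (posDef_smul' hB h')

end Aux

/-- `f_D(X) = (1/2)(‖X‖² + ‖X⁻¹‖²)` (Frobenius norm squared as `trace(Xᵀ X)`). -/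
noncomputable def fD {d : ℕ} (X : Matrix (Fin d) (Fin d) ℝ) : ℝ :=
  (1 / 2) * (Matrix.trace (Xᵀ * X) + Matrix.trace ((X⁻¹)ᵀ * X⁻¹))

/-- `f_D` is convex on the convex set of symmetric positive definite
`d × d` real matrices. -/
theorem fD_convexOn_posDef (d : ℕ) (hd : 1 ≤ d) :
    ConvexOn ℝ {X : Matrix (Fin d) (Fin d) ℝ | X.PosDef} fD := by
  refine ⟨convex_posDef, ?_⟩
  intro A hA B hB a b ha hb hab
  simp only [Set.mem_setOf_eq] at hA hB
  set M := a • A + b • B with hM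
  have hMpd : M.PosDef := convex_posDef hA hB ha hb hab
  have part1 : trace (Mᵀ * M) ≤ a * trace (Aᵀ * A) + b * trace (Bᵀ * B) :=
    frob_part ha hb hab
  have hMdet : IsUnit M.det := isUnit_iff_ne_zero.mpr hMpd.det_pos.ne'
  have kA := klein hMpd.inv hA
  have kB := klein hMpd.inv hB
  have hMM : M⁻¹ * M⁻¹ * M⁻¹ * M = M⁻¹ * M⁻¹ := by
    rw [mul_assoc, nonsing_inv_mul M hMdet, mul_one]
  have hcomb : a * trace (M⁻¹*M⁻¹*M⁻¹*A) + b * trace (M⁻¹*M⁻¹*M⁻¹*B)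
      = trace (M⁻¹*M⁻¹) := by
    have h1 : a * trace (M⁻¹*M⁻¹*M⁻¹*A) = trace ((M⁻¹*M⁻¹*M⁻¹) * (a • A)) := by
      rw [mul_smul_comm, trace_smul, smul_eq_mul]
    have h2 : b * trace (M⁻¹*M⁻¹*M⁻¹*B) = trace ((M⁻¹*M⁻¹*M⁻¹) * (b • B)) := by
      rw [mul_smul_comm, trace_smul, smul_eq_mul]
    rw [h1, h2, ← trace_add, ← mul_add, ← hM, hMM]
  have hsplit : a * trace (M⁻¹*M⁻¹) + b * trace (M⁻¹*M⁻¹) = trace (M⁻¹*M⁻¹) := by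
    rw [← add_mul, hab, one_mul]
  have part2 : trace (M⁻¹ * M⁻¹) ≤ a * trace (A⁻¹*A⁻¹) + b * trace (B⁻¹*B⁻¹) := by
    have h1 := mul_le_mul_of_nonneg_left kA ha
    have h2 := mul_le_mul_of_nonneg_left kB hb
    nlinarith [h1, h2, hcomb, hsplit]
  have tM : (M⁻¹)ᵀ = M⁻¹ := hMpd.inv.transpose_eq'
  have tA : (A⁻¹)ᵀ = A⁻¹ := hA.inv.transpose_eq'
  have tB : (B⁻¹)ᵀ = B⁻¹ := hB.inv.transpose_eq'
  simp only [fD, smul_eq_mul, tM, tA, tB]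
  linarith [part1, part2]
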